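/- Let m > 1, σ > 0, c > 0 and a > 0 be real numbers. There exists b ∈ [0,a] with ψ_a(b) = σ/c if and only if a^{m−1} ≤ σ/c ≤ m·a^{m−1}; and when such b exists it is unique. -/

import Mathlib

/-- The Rankine–Hugoniot jump function `ψ_a(x) = (a^m - x^m)/(a - x)` for `x ≠ a`,
extended by its limiting value `m·a^{m-1}` at `x = a`; powers are real powers. -/
noncomputable def psi (m a x : ℝ) : ℝ :=
  if x = a then m * a ^ (m - 1) else (a ^ m - x ^ m) / (a - x)

/-- For `m > 1`, `σ > 0`, `c > 0`, `a > 0`: there exists `b ∈ [0,a]` with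
`ψ_a(b) = σ/c` if and only if `a^{m-1} ≤ σ/c ≤ m·a^{m-1}`, and such a `b` is
unique when it exists. -/
theorem stmt5 (m σ c a : ℝ) (hm : 1 < m) (hσ : 0 < σ) (hc : 0 < c) (ha : 0 < a) :
    ((∃ b ∈ Set.Icc (0:ℝ) a, psi m a b = σ / c) ↔
      a ^ (m - 1) ≤ σ / c ∧ σ / c ≤ m * a ^ (m - 1)) ∧
    (∀ b₁ ∈ Set.Icc (0:ℝ) a, ∀ b₂ ∈ Set.Icc (0:ℝ) a,
      psi m a b₁ = σ / c → psi m a b₂ = σ / c → b₁ = b₂) := by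
  have hm0 : (0:ℝ) < m := lt_trans one_pos hm
  set f : ℝ → ℝ := fun t => t ^ m with hf
  have hpsi_ne : ∀ x : ℝ, x ≠ a → psi m a x = (f x - f a) / (x - a) := by
    intro x hx
    rw [psi, if_neg hx, ← neg_div_neg_eq]
    simp only [hf]
    ring_nf
  have hpsia : psi m a a = m * a ^ (m - 1) := by rw [psi, if_pos rfl]
  have hpsi0 : psi m a 0 = a ^ (m - 1) := by
    rw [psi, if_neg (ne_of_lt ha), Real.zero_rpow (ne_of_gt hm0), sub_zero, sub_zero,
      Real.rpow_sub ha, Real.rpow_one]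
  have hconv := strictConvexOn_rpow hm
  have hfc : ∀ x : ℝ, 0 ≤ x → ContinuousAt f x := fun x _ =>
    Real.continuousAt_rpow_const x m (Or.inr (le_of_lt hm0))
  have hderivA : HasDerivAt f (m * a ^ (m - 1)) a :=
    Real.hasDerivAt_rpow_const (Or.inl (ne_of_gt ha))
  have hmono : StrictMonoOn (psi m a) (Set.Icc 0 a) := by
    intro x hx y hy hxy
    rcases eq_or_lt_of_le hy.2 with hya | hya
    · have hxa : x < a := hya ▸ hxy
      obtain ⟨ξ, hξ, hd⟩ := exists_hasDerivAt_eq_slope f (fun t => m * t ^ (m - 1)) hxa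
        (fun t ht => (hfc t (le_trans hx.1 ht.1)).continuousWithinAt)
        (fun t ht => Real.hasDerivAt_rpow_const (Or.inl (ne_of_gt (lt_of_le_of_lt hx.1 ht.1))))
      have hlt : m * ξ ^ (m - 1) < m * a ^ (m - 1) := by
        have h1 : (0:ℝ) < m - 1 := by linarith
        exact (mul_lt_mul_iff_right₀ hm0).2
          (Real.rpow_lt_rpow (le_of_lt (lt_of_le_of_lt hx.1 hξ.1)) hξ.2 h1)
      rw [hya, hpsia, hpsi_ne x (ne_of_lt hxa)]
      calc (f x - f a) / (x - a) = (f a - f x) / (a - x) := by rw [← neg_div_neg_eq]; ring_nf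
        _ = m * ξ ^ (m - 1) := hd.symm
        _ < m * a ^ (m - 1) := hlt
    · rw [hpsi_ne x (ne_of_lt (lt_trans hxy hya)), hpsi_ne y (ne_of_lt hya)]
      exact hconv.secant_strict_mono (Set.mem_Ici.2 (le_of_lt ha))
        (Set.mem_Ici.2 hx.1) (Set.mem_Ici.2 hy.1)
        (ne_of_lt (lt_trans hxy hya)) (ne_of_lt hya) hxy
  have hcont : ContinuousOn (psi m a) (Set.Icc 0 a) := by
    intro x hx
    rcases eq_or_lt_of_le hx.2 with hxa | hxa
    · subst hxa
      rw [← continuousWithinAt_diff_self, ContinuousWithinAt, hpsia]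
      have htends := hasDerivAt_iff_tendsto_slope.1 hderivA
      refine (htends.mono_left (nhdsWithin_mono _ ?_)).congr' ?_
      · intro t ht; exact ht.2
      · filter_upwards [self_mem_nhdsWithin] with t ht
        rw [slope_def_field, hpsi_ne t ht.2]
    · have hev : psi m a =ᶠ[nhds x] fun t => (a ^ m - t ^ m) / (a - t) := by
        filter_upwards [eventually_ne_nhds (ne_of_lt hxa)] with t ht
        rw [psi, if_neg ht]
      refine ContinuousAt.continuousWithinAt (ContinuousAt.congr ?_ hev.symm)
      exact (continuousAt_const.sub (hfc x hx.1)).div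
        (continuousAt_const.sub continuousAt_id)
        (by simp [sub_ne_zero, (ne_of_lt hxa).symm])
  have hmem0 : (0:ℝ) ∈ Set.Icc (0:ℝ) a := ⟨le_refl _, le_of_lt ha⟩
  have hmema : a ∈ Set.Icc (0:ℝ) a := ⟨le_of_lt ha, le_refl _⟩
  constructor
  · constructor
    · rintro ⟨b, hb, hbe⟩
      constructor
      · rw [← hpsi0, ← hbe]; exact hmono.monotoneOn hmem0 hb hb.1
      · rw [← hpsia, ← hbe]; exact hmono.monotoneOn hb hmema hb.2
    · rintro ⟨h1, h2⟩
      have := intermediate_value_Icc (le_of_lt ha) hcont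
      obtain ⟨b, hb, hbe⟩ := this (by rw [hpsi0, hpsia]; exact ⟨h1, h2⟩)
      exact ⟨b, hb, hbe⟩
  · intro b₁ hb₁ b₂ hb₂ h1 h2
    exact hmono.injOn hb₁ hb₂ (h1.trans h2.symm)
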